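/- arXiv:1311.6034 — 10 statements merged into one kernel-verified Lean document; each statement's English description precedes it below -/
import Mathlib

section
/- Spherical law of cosines (Lobachevsky's general spherical triangle formula): for linearly independent unit vectors A, B, C in a real inner product space, with sides a = ∠(B,C), b = ∠(A,C), c = ∠(A,B) and vertex angle at C equal to ∠(A − ⟨A,C⟩•C, B − ⟨B,C⟩•C), one has cos c = cos a · cos b + sin a · sin b · cos(vertex angle at C). -/
open InnerProductGeometry

local notation "⟪" x ", " y "⟫" => @inner ℝ _ _ x y

lemma sph_norm_proj {E : Type*} [NormedAddCommGroup E] [InnerProductSpace ℝ E]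
    (x y : E) (hx : ‖x‖ = 1) (hy : ‖y‖ = 1) :
    ‖x - (⟪x, y⟫ : ℝ) • y‖ = Real.sin (angle x y) := by
  have h := sin_angle_mul_norm_mul_norm x y
  rw [hx, hy, mul_one, mul_one] at h
  have hxx : (⟪x, x⟫ : ℝ) = 1 := by
    rw [real_inner_self_eq_norm_sq, hx]; norm_num
  have hyy : (⟪y, y⟫ : ℝ) = 1 := by
    rw [real_inner_self_eq_norm_sq, hy]; norm_num
  have hn : ‖x - (⟪x, y⟫ : ℝ) • y‖ ^ 2 = 1 - ⟪x, y⟫ * ⟪x, y⟫ := by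
    rw [← real_inner_self_eq_norm_sq]
    simp only [inner_sub_left, inner_sub_right, real_inner_smul_left,
      real_inner_smul_right, hxx, hyy, real_inner_comm y x]
    ring
  rw [h, hxx, hyy, one_mul, ← hn, Real.sqrt_sq (norm_nonneg _)]

/-- Spherical law of cosines for a spherical triangle given by linearly independent
unit vectors `A`, `B`, `C` in a real inner product space:
`cos c = cos a * cos b + sin a * sin b * cos C` where `a = ∠(B,C)`, `b = ∠(A,C)`,
`c = ∠(A,B)` and the vertex angle at `C` is the angle between the projections of
`A` and `B` to the orthogonal complement of `C`. -/
theorem spherical_law_of_cosines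
    {E : Type*} [NormedAddCommGroup E] [InnerProductSpace ℝ E]
    (A B C : E) (hA : ‖A‖ = 1) (hB : ‖B‖ = 1) (hC : ‖C‖ = 1)
    (hli : LinearIndependent ℝ ![A, B, C]) :
    Real.cos (angle A B) =
      Real.cos (angle B C) * Real.cos (angle A C) +
      Real.sin (angle B C) * Real.sin (angle A C) *
        Real.cos (angle (A - (inner ℝ A C : ℝ) • C) (B - (inner ℝ B C : ℝ) • C)) := by
  set u : E := A - (⟪A, C⟫ : ℝ) • C with hu
  set v : E := B - (⟪B, C⟫ : ℝ) • C with hv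
  have hind := Fintype.linearIndependent_iff.mp hli
  have hu0 : u ≠ 0 := by
    intro h
    have := hind ![1, 0, -(⟪A, C⟫ : ℝ)] (by
      simp [Fin.sum_univ_three]
      simpa [hu, sub_eq_add_neg] using h) 0
    simp at this
  have hv0 : v ≠ 0 := by
    intro h
    have := hind ![0, 1, -(⟪B, C⟫ : ℝ)] (by
      simp [Fin.sum_univ_three]
      simpa [hv, sub_eq_add_neg] using h) 1
    simp at this
  have hnu : ‖u‖ = Real.sin (angle A C) := sph_norm_proj A C hA hC
  have hnv : ‖v‖ = Real.sin (angle B C) := sph_norm_proj B C hB hC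
  have huv : (⟪u, v⟫ : ℝ) = ⟪A, B⟫ - ⟪A, C⟫ * ⟪B, C⟫ := by
    have hCC : (⟪C, C⟫ : ℝ) = 1 := by
      rw [real_inner_self_eq_norm_sq, hC]; norm_num
    simp only [hu, hv, inner_sub_left, inner_sub_right, real_inner_smul_left,
      real_inner_smul_right, hCC, real_inner_comm C A, real_inner_comm C B]
    ring
  rw [cos_angle A B, cos_angle B C, cos_angle A C, cos_angle u v,
    hA, hB, hC, ← hnu, ← hnv, huv]
  have h1 : ‖u‖ ≠ 0 := norm_ne_zero_iff.mpr hu0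
  have h2 : ‖v‖ ≠ 0 := norm_ne_zero_iff.mpr hv0
  field_simp
  ring
end

section
/- Spherical Pythagorean theorem (third equation of Lobachevsky's right-triangle list): for linearly independent unit vectors A, B, C in a real inner product space such that the vertex angle at C is π/2 (equivalently ⟨A − ⟨A,C⟩•C, B − ⟨B,C⟩•C⟩ = 0), one has cos(∠(A,B)) = cos(∠(B,C)) · cos(∠(A,C)), i.e. cos c = cos a · cos b. -/
open InnerProductGeometry

/-- Spherical Pythagorean theorem: for a spherical triangle given by linearly
independent unit vectors `A`, `B`, `C` with a right vertex angle at `C`,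
`cos c = cos a * cos b`, i.e. `cos ∠(A,B) = cos ∠(B,C) * cos ∠(A,C)`. -/
theorem spherical_pythagoras
    {E : Type*} [NormedAddCommGroup E] [InnerProductSpace ℝ E]
    (A B C : E) (hA : ‖A‖ = 1) (hB : ‖B‖ = 1) (hC : ‖C‖ = 1)
    (hli : LinearIndependent ℝ ![A, B, C])
    (hright : angle (A - (inner ℝ A C : ℝ) • C) (B - (inner ℝ B C : ℝ) • C) = Real.pi / 2) :
    Real.cos (angle A B) = Real.cos (angle B C) * Real.cos (angle A C) := by
  have hCC : (inner ℝ C C : ℝ) = 1 := by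
    rw [real_inner_self_eq_norm_sq, hC]; norm_num
  have h0 : (inner ℝ (A - (inner ℝ A C : ℝ) • C) (B - (inner ℝ B C : ℝ) • C) : ℝ) = 0 :=
    inner_eq_zero_iff_angle_eq_pi_div_two _ _ |>.2 hright
  have hkey : (inner ℝ A B : ℝ) = (inner ℝ A C : ℝ) * (inner ℝ B C : ℝ) := by
    simp only [inner_sub_sub_self, real_inner_smul_left, real_inner_smul_right, hCC,
      inner_sub_left, inner_sub_right] at h0
    have hs : (inner ℝ C B : ℝ) = inner ℝ B C := real_inner_comm B C
    rw [hs] at h0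
    nlinarith [h0]
  rw [cos_angle, cos_angle, cos_angle, hA, hB, hC, hkey]
  ring
end

section
/- First equation of Lobachevsky's spherical right-triangle list: for linearly independent unit vectors A, B, C in a real inner product space such that the vertex angle at C is π/2, one has sin(vertex angle at A) · sin(∠(A,B)) = sin(∠(B,C)), i.e. sin A · sin c = sin a. -/
open InnerProductGeometry

/-- First equation of Lobachevsky's spherical right-triangle list: for a spherical
triangle given by linearly independent unit vectors `A`, `B`, `C` with a right
vertex angle at `C`, `sin A * sin c = sin a`, i.e.
`sin (vertex angle at A) * sin ∠(A,B) = sin ∠(B,C)`. -/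
theorem spherical_sin_right
    {E : Type*} [NormedAddCommGroup E] [InnerProductSpace ℝ E]
    (A B C : E) (hA : ‖A‖ = 1) (hB : ‖B‖ = 1) (hC : ‖C‖ = 1)
    (hli : LinearIndependent ℝ ![A, B, C])
    (hright : angle (A - (inner ℝ A C : ℝ) • C) (B - (inner ℝ B C : ℝ) • C) = Real.pi / 2) :
    Real.sin (angle (B - (inner ℝ B A : ℝ) • A) (C - (inner ℝ C A : ℝ) • A)) *
      Real.sin (angle A B) = Real.sin (angle B C) := by
  set p : ℝ := inner ℝ A B with hp
  set q : ℝ := inner ℝ B C with hq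
  set r : ℝ := inner ℝ A C with hr
  have hBA : (inner ℝ B A : ℝ) = p := real_inner_comm A B
  have hCA : (inner ℝ C A : ℝ) = r := real_inner_comm A C
  have hCB : (inner ℝ C B : ℝ) = q := real_inner_comm B C
  rw [hBA, hCA]
  have hAA : (inner ℝ A A : ℝ) = 1 := by rw [real_inner_self_eq_norm_sq, hA]; norm_num
  have hBB : (inner ℝ B B : ℝ) = 1 := by rw [real_inner_self_eq_norm_sq, hB]; norm_num
  have hCC : (inner ℝ C C : ℝ) = 1 := by rw [real_inner_self_eq_norm_sq, hC]; norm_num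
  -- the right angle condition gives p = r * q
  have horth : (inner ℝ (A - r • C) (B - q • C) : ℝ) = 0 :=
    (inner_eq_zero_iff_angle_eq_pi_div_two _ _).2 hright
  have hprq : p = r * q := by
    have := horth
    simp only [inner_sub_left, inner_sub_right, real_inner_smul_left, real_inner_smul_right,
      hCC, hCB, hCA, ← hp, ← hq, ← hr] at this
    nlinarith [this]
  -- nonvanishing of the projections
  have hBA0 : B - p • A ≠ 0 := by
    intro h
    have h2 := Fintype.linearIndependent_iff.mp hli ![p, -1, 0] ?_ 1
    · norm_num at h2
    · have hBpA : B = p • A := by rwa [sub_eq_zero] at h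
      simp [Fin.sum_univ_three, hBpA]
  have hCA0 : C - r • A ≠ 0 := by
    intro h
    have h2 := Fintype.linearIndependent_iff.mp hli ![r, 0, -1] ?_ 2
    · simp at h2
    · have hCrA : C = r • A := by rwa [sub_eq_zero] at h
      simp [Fin.sum_univ_three, hCrA]
  -- norms of the projections
  have hnB : ‖B - p • A‖ ^ 2 = 1 - p ^ 2 := by
    rw [← real_inner_self_eq_norm_sq]
    simp only [inner_sub_left, inner_sub_right, real_inner_smul_left, real_inner_smul_right,
      hAA, hBB, hBA, ← hp]
    ring
  have hnC : ‖C - r • A‖ ^ 2 = 1 - r ^ 2 := by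
    rw [← real_inner_self_eq_norm_sq]
    simp only [inner_sub_left, inner_sub_right, real_inner_smul_left, real_inner_smul_right,
      hAA, hCC, hCA, ← hr]
    ring
  have hnBpos : (0:ℝ) < 1 - p ^ 2 := by
    rw [← hnB]; exact pow_pos (norm_pos_iff.mpr hBA0) 2
  have hnCpos : (0:ℝ) < 1 - r ^ 2 := by
    rw [← hnC]; exact pow_pos (norm_pos_iff.mpr hCA0) 2
  -- inner product of the projections
  have hinner : (inner ℝ (B - p • A) (C - r • A) : ℝ) = q - p * r := by
    simp only [inner_sub_left, inner_sub_right, real_inner_smul_left, real_inner_smul_right,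
      hAA, hBA, hCA, ← hp, ← hq, ← hr]
    ring
  -- cosines
  have hcosc : Real.cos (angle A B) = p := by
    rw [cos_angle, hA, hB, ← hp]; norm_num
  have hcosa : Real.cos (angle B C) = q := by
    rw [cos_angle, hB, hC, ← hq]; norm_num
  have hcosA2 : Real.cos (angle (B - p • A) (C - r • A)) ^ 2 =
      (q - p * r) ^ 2 / ((1 - p ^ 2) * (1 - r ^ 2)) := by
    rw [cos_angle, hinner, div_pow, mul_pow, hnB, hnC]
  -- sines squared
  have hsinA2 : Real.sin (angle (B - p • A) (C - r • A)) ^ 2 =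
      1 - (q - p * r) ^ 2 / ((1 - p ^ 2) * (1 - r ^ 2)) := by
    rw [Real.sin_sq, hcosA2]
  have hsinc2 : Real.sin (angle A B) ^ 2 = 1 - p ^ 2 := by
    rw [Real.sin_sq, hcosc]
  have hsina2 : Real.sin (angle B C) ^ 2 = 1 - q ^ 2 := by
    rw [Real.sin_sq, hcosa]
  -- all sines are nonneg
  have hs1 : 0 ≤ Real.sin (angle (B - p • A) (C - r • A)) :=
    Real.sin_nonneg_of_nonneg_of_le_pi (angle_nonneg _ _) (angle_le_pi _ _)
  have hs2 : 0 ≤ Real.sin (angle A B) :=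
    Real.sin_nonneg_of_nonneg_of_le_pi (angle_nonneg _ _) (angle_le_pi _ _)
  have hs3 : 0 ≤ Real.sin (angle B C) :=
    Real.sin_nonneg_of_nonneg_of_le_pi (angle_nonneg _ _) (angle_le_pi _ _)
  have hsq : (Real.sin (angle (B - p • A) (C - r • A)) * Real.sin (angle A B)) ^ 2 =
      Real.sin (angle B C) ^ 2 := by
    have h1 : (1 - p ^ 2) ≠ 0 := ne_of_gt hnBpos
    have h2 : (1 - r ^ 2) ≠ 0 := ne_of_gt hnCpos
    rw [mul_pow, hsinA2, hsinc2, hsina2, hprq]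
    have h1' : (1 - (r * q) ^ 2) ≠ 0 := hprq ▸ h1
    have h1'' : 1 - q ^ 2 * r ^ 2 ≠ 0 := by rw [show q ^ 2 * r ^ 2 = (r * q) ^ 2 by ring]; exact h1'
    field_simp
    ring
  have := abs_eq_abs.mp (by
    rw [← Real.sqrt_sq_eq_abs, ← Real.sqrt_sq_eq_abs, hsq] :
    |Real.sin (angle (B - p • A) (C - r • A)) * Real.sin (angle A B)| =
      |Real.sin (angle B C)|)
  rcases this with h | h
  · exact h
  · have hz : Real.sin (angle B C) = 0 :=
      le_antisymm (by linarith [mul_nonneg hs1 hs2]) hs3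
    rw [hz] at h ⊢
    linarith
end

section
/- Second equation of Lobachevsky's spherical right-triangle list: for linearly independent unit vectors A, B, C in a real inner product space such that the vertex angle at C is π/2, one has cos(∠(A,C)) · sin(vertex angle at A) = cos(vertex angle at B), i.e. cos b · sin A = cos B. -/
open InnerProductGeometry

private lemma proj_norm {E : Type*} [NormedAddCommGroup E] [InnerProductSpace ℝ E]
    (x y : E) (hx : ‖x‖ = 1) (hy : ‖y‖ = 1) :
    ‖y - (inner ℝ x y : ℝ) • x‖ = Real.sqrt (1 - (inner ℝ x y : ℝ)^2) := by
  rw [show (1 : ℝ) - (inner ℝ x y : ℝ)^2 = ‖y - (inner ℝ x y : ℝ) • x‖^2 by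
    rw [norm_sub_sq_real]
    simp [norm_smul, real_inner_smul_right, hx, hy, real_inner_comm y x]
    ring]
  exact (Real.sqrt_sq (norm_nonneg _)).symm

/-- Second equation of Lobachevsky's spherical right-triangle list: for a spherical
triangle given by linearly independent unit vectors `A`, `B`, `C` with a right
vertex angle at `C`, `cos b * sin A = cos B`, i.e.
`cos ∠(A,C) * sin (vertex angle at A) = cos (vertex angle at B)`. -/
theorem spherical_cos_sin_right
    {E : Type*} [NormedAddCommGroup E] [InnerProductSpace ℝ E]
    (A B C : E) (hA : ‖A‖ = 1) (hB : ‖B‖ = 1) (hC : ‖C‖ = 1)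
    (hli : LinearIndependent ℝ ![A, B, C])
    (hright : angle (A - (inner ℝ A C : ℝ) • C) (B - (inner ℝ B C : ℝ) • C) = Real.pi / 2) :
    Real.cos (angle A C) *
      Real.sin (angle (B - (inner ℝ B A : ℝ) • A) (C - (inner ℝ C A : ℝ) • A)) =
      Real.cos (angle (A - (inner ℝ A B : ℝ) • B) (C - (inner ℝ C B : ℝ) • B)) := by
  set α : ℝ := inner ℝ B C with hαdef
  set β : ℝ := inner ℝ A C with hβdef
  set γ : ℝ := inner ℝ A B with hγdef
  have hAA : (inner ℝ A A : ℝ) = 1 := by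
    rw [real_inner_self_eq_norm_sq, hA]; norm_num
  have hBB : (inner ℝ B B : ℝ) = 1 := by
    rw [real_inner_self_eq_norm_sq, hB]; norm_num
  have hCC : (inner ℝ C C : ℝ) = 1 := by
    rw [real_inner_self_eq_norm_sq, hC]; norm_num
  have eBA : (inner ℝ B A : ℝ) = γ := by rw [real_inner_comm, ← hγdef]
  have eCA : (inner ℝ C A : ℝ) = β := by rw [real_inner_comm, ← hβdef]
  have eCB : (inner ℝ C B : ℝ) = α := by rw [real_inner_comm, ← hαdef]
  -- right angle gives γ = α * β
  have hperp : (inner ℝ (A - β • C) (B - α • C) : ℝ) = 0 :=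
    (inner_eq_zero_iff_angle_eq_pi_div_two _ _).mpr hright
  have hγαβ : γ = α * β := by
    rw [inner_sub_left, inner_sub_right, inner_sub_right, real_inner_smul_left,
      real_inner_smul_left, real_inner_smul_right, real_inner_smul_right, hCC, eCB,
      ← hγdef, ← hβdef] at hperp
    linarith
  -- pairwise nonproportionality
  have key : ∀ (x y : E) (r : ℝ) (g : Fin 3 → ℝ), (g 0 • A + g 1 • B + g 2 • C = x - r • y)
      → (g 0 ≠ 0 ∨ g 1 ≠ 0 ∨ g 2 ≠ 0) → x ≠ r • y := by
    intro x y r g hg hne hxy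
    have h0 := Fintype.linearIndependent_iff.mp hli g (by
      rw [Fin.sum_univ_three]; simp only [Matrix.cons_val_zero, Matrix.cons_val_one,
        Matrix.head_cons, Matrix.cons_val_two, Matrix.tail_cons]
      rw [hg, hxy, sub_self])
    rcases hne with h | h | h <;> [exact h (h0 0); exact h (h0 1); exact h (h0 2)]
  have hCA : C ≠ β • A := key C A β ![-β, 0, 1] (by simp [sub_eq_neg_add]) (by right; right; exact one_ne_zero)
  have hCB : C ≠ α • B := key C B α ![0, -α, 1] (by simp [sub_eq_neg_add]) (by right; right; exact one_ne_zero)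
  -- positivity
  have hQ : 0 < 1 - β^2 := by
    have h1 : ‖C - β • A‖ = Real.sqrt (1 - β^2) := by
      have := proj_norm A C hA hC; rwa [← hβdef] at this
    have h2 : 0 < ‖C - β • A‖ := norm_pos_iff.mpr (sub_ne_zero.mpr hCA)
    rw [h1] at h2
    exact Real.sqrt_pos.mp h2
  have hP : 0 < 1 - α^2 := by
    have h1 : ‖C - α • B‖ = Real.sqrt (1 - α^2) := by
      have := proj_norm B C hB hC; rwa [← hαdef] at this
    have h2 : 0 < ‖C - α • B‖ := norm_pos_iff.mpr (sub_ne_zero.mpr hCB)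
    rw [h1] at h2
    exact Real.sqrt_pos.mp h2
  have hR : 0 < 1 - γ^2 := by rw [hγαβ]; nlinarith
  -- rewrite the goal's inner products
  rw [eBA, eCA, eCB]
  -- cos b = β
  have hcosb : Real.cos (angle A C) = β := by
    rw [cos_angle, hA, hC, ← hβdef]; simp
  -- norms of the projections
  have hnBA : ‖B - γ • A‖ = Real.sqrt (1 - γ^2) := by
    have := proj_norm A B hA hB; rwa [← hγdef] at this
  have hnCA : ‖C - β • A‖ = Real.sqrt (1 - β^2) := by
    have := proj_norm A C hA hC; rwa [← hβdef] at this
  have hnAB : ‖A - γ • B‖ = Real.sqrt (1 - γ^2) := by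
    have := proj_norm B A hB hA
    rwa [real_inner_comm, ← hγdef] at this
  have hnCB : ‖C - α • B‖ = Real.sqrt (1 - α^2) := by
    have := proj_norm B C hB hC; rwa [← hαdef] at this
  -- inner products of projections
  have hiA : (inner ℝ (B - γ • A) (C - β • A) : ℝ) = α - γ * β := by
    rw [inner_sub_left, inner_sub_right, inner_sub_right, real_inner_smul_left,
      real_inner_smul_left, real_inner_smul_right, real_inner_smul_right, hAA,
      eBA, ← hβdef, ← hαdef]
    ring
  have hiB : (inner ℝ (A - γ • B) (C - α • B) : ℝ) = β - γ * α := by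
    rw [inner_sub_left, inner_sub_right, inner_sub_right, real_inner_smul_left,
      real_inner_smul_left, real_inner_smul_right, real_inner_smul_right, hBB,
      ← hαdef, ← hγdef, ← hβdef]
    ring
  -- cosines of vertex angles
  have hcosA : Real.cos (angle (B - γ • A) (C - β • A)) =
      (α - γ * β) / (Real.sqrt (1 - γ^2) * Real.sqrt (1 - β^2)) := by
    rw [cos_angle, hiA, hnBA, hnCA]
  have hcosB : Real.cos (angle (A - γ • B) (C - α • B)) =
      (β - γ * α) / (Real.sqrt (1 - γ^2) * Real.sqrt (1 - α^2)) := by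
    rw [cos_angle, hiB, hnAB, hnCB]
  have hsinA : Real.sin (angle (B - γ • A) (C - β • A)) =
      Real.sqrt (1 - ((α - γ * β) / (Real.sqrt (1 - γ^2) * Real.sqrt (1 - β^2)))^2) := by
    rw [Real.sin_eq_sqrt_one_sub_cos_sq (angle_nonneg _ _) (angle_le_pi _ _), hcosA]
  rw [hcosb, hsinA, hcosB, hγαβ]
  -- pure algebra now
  set sP := Real.sqrt (1 - α^2) with hsP
  set sQ := Real.sqrt (1 - β^2) with hsQ
  set sR := Real.sqrt (1 - (α*β)^2) with hsR
  have hR' : (0:ℝ) < 1 - (α*β)^2 := by nlinarith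
  have hsP2 : sP^2 = 1 - α^2 := Real.sq_sqrt hP.le
  have hsQ2 : sQ^2 = 1 - β^2 := Real.sq_sqrt hQ.le
  have hsR2 : sR^2 = 1 - (α*β)^2 := Real.sq_sqrt hR'.le
  have hsP0 : 0 < sP := Real.sqrt_pos.mpr hP
  have hsQ0 : 0 < sQ := Real.sqrt_pos.mpr hQ
  have hsR0 : 0 < sR := Real.sqrt_pos.mpr hR'
  have h1 : 1 - ((α - α * β * β) / (sR * sQ))^2 = (1 - α^2) / (1 - (α*β)^2) := by
    rw [div_pow, mul_pow, hsR2, hsQ2]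
    have hD : (1:ℝ) - α^2*β^2 ≠ 0 := by rw [← mul_pow]; exact hR'.ne'
    field_simp [hD, hQ.ne']
    ring
  rw [h1, Real.sqrt_div hP.le, ← hsP, ← hsR]
  field_simp
  linear_combination β * hsP2
end

section
/- Spherical law of sines (first equation of Lobachevsky's general spherical list): for linearly independent unit vectors A, B, C in a real inner product space, sin(∠(B,C)) · sin(vertex angle at B) = sin(∠(A,C)) · sin(vertex angle at A), i.e. sin a · sin B = sin b · sin A. -/
open InnerProductGeometry RealInnerProductSpace

private lemma sub_smul_ne_zero' {E : Type*} [NormedAddCommGroup E] [InnerProductSpace ℝ E]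
    {X Y : E} (h : LinearIndependent ℝ ![X, Y]) (t : ℝ) : X - t • Y ≠ 0 := by
  intro hxy
  have := Fintype.linearIndependent_iff.mp h ![1, -t]
  have h0 := this (by
    simpa [Fin.sum_univ_two, neg_smul, sub_eq_add_neg] using hxy) 0
  simp at h0

private lemma real_inner_self_pos' {E : Type*} [NormedAddCommGroup E]
    [InnerProductSpace ℝ E] {x : E} (hx : x ≠ 0) : (0:ℝ) < ⟪x, x⟫ :=
  lt_of_le_of_ne real_inner_self_nonneg (Ne.symm (inner_self_ne_zero.mpr hx))

private lemma aux_sin_prod {E : Type*} [NormedAddCommGroup E] [InnerProductSpace ℝ E]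
    (X Y Z : E) (hX : ‖X‖ = 1) (hY : ‖Y‖ = 1) (hZ : ‖Z‖ = 1)
    (hP : Y - (⟪Y, X⟫ : ℝ) • X ≠ 0) (hQ : Z - (⟪Z, X⟫ : ℝ) • X ≠ 0) :
    Real.sin (angle X Z) *
      Real.sin (angle (Y - (⟪Y, X⟫ : ℝ) • X) (Z - (⟪Z, X⟫ : ℝ) • X)) =
    Real.sqrt (1 - ⟪Y, X⟫^2 - ⟪Z, X⟫^2 - ⟪Y, Z⟫^2 + 2*⟪Y, X⟫*⟪Z, X⟫*⟪Y, Z⟫) /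
      Real.sqrt (1 - ⟪Y, X⟫^2) := by
  have hXX : (⟪X, X⟫ : ℝ) = 1 := by rw [real_inner_self_eq_norm_sq, hX]; norm_num
  have hYY : (⟪Y, Y⟫ : ℝ) = 1 := by rw [real_inner_self_eq_norm_sq, hY]; norm_num
  have hZZ : (⟪Z, Z⟫ : ℝ) = 1 := by rw [real_inner_self_eq_norm_sq, hZ]; norm_num
  set c : ℝ := ⟪Y, X⟫ with hc
  set d : ℝ := ⟪Z, X⟫ with hd
  set a : ℝ := ⟪Y, Z⟫ with ha
  set P : E := Y - c • X with hPdef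
  set Q : E := Z - d • X with hQdef
  have hXY : (⟪X, Y⟫ : ℝ) = c := (real_inner_comm X Y).symm
  have hXZ : (⟪X, Z⟫ : ℝ) = d := (real_inner_comm X Z).symm
  have hPP : (⟪P, P⟫ : ℝ) = 1 - c^2 := by
    simp only [hPdef, inner_sub_left, inner_sub_right, real_inner_smul_left,
      real_inner_smul_right, hXX, hYY, hXY, ← hc]
    ring
  have hQQ : (⟪Q, Q⟫ : ℝ) = 1 - d^2 := by
    simp only [hQdef, inner_sub_left, inner_sub_right, real_inner_smul_left,
      real_inner_smul_right, hXX, hZZ, hXZ, ← hd]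
    ring
  have hPQ : (⟪P, Q⟫ : ℝ) = a - c * d := by
    simp only [hPdef, hQdef, inner_sub_left, inner_sub_right, real_inner_smul_left,
      real_inner_smul_right, hXX, hXY, hXZ, ← hc, ← hd, ← ha]
    ring
  have hc2 : (0:ℝ) < 1 - c^2 := hPP ▸ real_inner_self_pos' hP
  have hd2 : (0:ℝ) < 1 - d^2 := hQQ ▸ real_inner_self_pos' hQ
  have hnP : ‖P‖ = Real.sqrt (1 - c^2) := by
    rw [← hPP, real_inner_self_eq_norm_sq, Real.sqrt_sq (norm_nonneg _)]
  have hnQ : ‖Q‖ = Real.sqrt (1 - d^2) := by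
    rw [← hQQ, real_inner_self_eq_norm_sq, Real.sqrt_sq (norm_nonneg _)]
  have hsin1 : Real.sin (angle X Z) = Real.sqrt (1 - d^2) := by
    have h := sin_angle_mul_norm_mul_norm X Z
    rw [hX, hZ, hXX, hZZ, hXZ] at h
    simpa [sq] using h
  have hsin2 : Real.sin (angle P Q) =
      Real.sqrt ((1 - c^2) * (1 - d^2) - (a - c*d)^2) /
        (Real.sqrt (1 - c^2) * Real.sqrt (1 - d^2)) := by
    have h := sin_angle_mul_norm_mul_norm P Q
    rw [hPP, hQQ, hPQ, hnP, hnQ] at h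
    rw [eq_div_iff (by positivity)]
    rw [h]; ring_nf
  rw [hsin1, hsin2]
  have hs1 : Real.sqrt (1 - c^2) ≠ 0 := by positivity
  have hs2 : Real.sqrt (1 - d^2) ≠ 0 := by positivity
  rw [show (1 - c^2) * (1 - d^2) - (a - c*d)^2
      = 1 - c^2 - d^2 - a^2 + 2*c*d*a by ring]
  field_simp

/-- Spherical law of sines: for a spherical triangle given by linearly independent
unit vectors `A`, `B`, `C`, `sin a * sin B = sin b * sin A`, i.e.
`sin ∠(B,C) * sin (vertex angle at B) = sin ∠(A,C) * sin (vertex angle at A)`. -/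
theorem spherical_law_of_sines
    {E : Type*} [NormedAddCommGroup E] [InnerProductSpace ℝ E]
    (A B C : E) (hA : ‖A‖ = 1) (hB : ‖B‖ = 1) (hC : ‖C‖ = 1)
    (hli : LinearIndependent ℝ ![A, B, C]) :
    Real.sin (angle B C) *
      Real.sin (angle (A - (inner ℝ A B : ℝ) • B) (C - (inner ℝ C B : ℝ) • B)) =
    Real.sin (angle A C) *
      Real.sin (angle (B - (inner ℝ B A : ℝ) • A) (C - (inner ℝ C A : ℝ) • A)) := by
  have comp2 : ∀ (i j : Fin 3), ![A, B, C] ∘ ![i, j] = ![![A,B,C] i, ![A,B,C] j] := by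
    intro i j; ext k; fin_cases k <;> rfl
  have pair : ∀ (i j : Fin 3), i ≠ j →
      LinearIndependent ℝ ![![A,B,C] i, ![A,B,C] j] := by
    intro i j hij
    have := hli.comp ![i, j] (by
      intro x y hxy
      fin_cases x <;> fin_cases y <;> simp_all)
    rwa [comp2] at this
  have hAB : LinearIndependent ℝ ![A, B] := pair 0 1 (by decide)
  have hCB : LinearIndependent ℝ ![C, B] := pair 2 1 (by decide)
  have hBA : LinearIndependent ℝ ![B, A] := pair 1 0 (by decide)
  have hCA : LinearIndependent ℝ ![C, A] := pair 2 0 (by decide)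
  have h1 := aux_sin_prod B A C hB hA hC (sub_smul_ne_zero' hAB _) (sub_smul_ne_zero' hCB _)
  have h2 := aux_sin_prod A B C hA hB hC (sub_smul_ne_zero' hBA _) (sub_smul_ne_zero' hCA _)
  rw [h1, h2]
  rw [real_inner_comm B A, real_inner_comm C A, real_inner_comm C B]
  congr 2
  ring
end

section
/- Dual spherical law of cosines (fourth equation of Lobachevsky's general spherical list): for linearly independent unit vectors A, B, C in a real inner product space, cos(∠(B,C)) · sin(vertex angle at B) · sin(vertex angle at C) = cos(vertex angle at B) · cos(vertex angle at C) + cos(vertex angle at A), i.e. cos a · sin B · sin C = cos B · cos C + cos A. -/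
open InnerProductGeometry

section Aux
variable {E : Type*} [NormedAddCommGroup E] [InnerProductSpace ℝ E]

private lemma proj_inner' (u v w : E) (hw : ‖w‖ = 1) :
    (inner ℝ (u - (inner ℝ u w:ℝ)•w) (v - (inner ℝ v w:ℝ)•w) : ℝ) =
      (inner ℝ u v:ℝ) - (inner ℝ u w:ℝ) * (inner ℝ v w:ℝ) := by
  simp [inner_sub_left, inner_sub_right, real_inner_smul_left, real_inner_smul_right,
    real_inner_self_eq_norm_sq, hw, real_inner_comm w v, real_inner_comm w u]

private lemma proj_norm' (u w : E) (hw : ‖w‖ = 1) (hu : ‖u‖ = 1) :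
    ‖u - (inner ℝ u w:ℝ)•w‖ = Real.sqrt (1 - (inner ℝ u w:ℝ) * (inner ℝ u w:ℝ)) := by
  rw [norm_eq_sqrt_real_inner, proj_inner' u u w hw, real_inner_self_eq_norm_sq, hu]
  norm_num

private lemma proj_cos' (u v w : E) (hw : ‖w‖ = 1) (hu : ‖u‖ = 1) (hv : ‖v‖ = 1) :
    Real.cos (angle (u - (inner ℝ u w:ℝ)•w) (v - (inner ℝ v w:ℝ)•w)) =
      ((inner ℝ u v:ℝ) - (inner ℝ u w:ℝ) * (inner ℝ v w:ℝ)) /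
      (Real.sqrt (1 - (inner ℝ u w:ℝ) * (inner ℝ u w:ℝ)) *
        Real.sqrt (1 - (inner ℝ v w:ℝ) * (inner ℝ v w:ℝ))) := by
  rw [cos_angle, proj_inner' u v w hw, proj_norm' u w hw hu, proj_norm' v w hw hv]

private lemma proj_sin' (u v w : E) (hw : ‖w‖ = 1) (hu : ‖u‖ = 1) (hv : ‖v‖ = 1) :
    Real.sin (angle (u - (inner ℝ u w:ℝ)•w) (v - (inner ℝ v w:ℝ)•w)) *
      (Real.sqrt (1 - (inner ℝ u w:ℝ) * (inner ℝ u w:ℝ)) *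
        Real.sqrt (1 - (inner ℝ v w:ℝ) * (inner ℝ v w:ℝ))) =
      Real.sqrt ((1 - (inner ℝ u w:ℝ) * (inner ℝ u w:ℝ)) * (1 - (inner ℝ v w:ℝ) * (inner ℝ v w:ℝ)) -
        ((inner ℝ u v:ℝ) - (inner ℝ u w:ℝ) * (inner ℝ v w:ℝ)) *
          ((inner ℝ u v:ℝ) - (inner ℝ u w:ℝ) * (inner ℝ v w:ℝ))) := by
  have h := sin_angle_mul_norm_mul_norm (u - (inner ℝ u w:ℝ)•w) (v - (inner ℝ v w:ℝ)•w)
  rw [proj_norm' u w hw hu, proj_norm' v w hw hv, proj_inner' u v w hw,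
    proj_inner' u u w hw, proj_inner' v v w hw, real_inner_self_eq_norm_sq,
    real_inner_self_eq_norm_sq, hu, hv] at h
  convert h using 3 <;> ring

private lemma pair_pos' (u w : E) (hu : ‖u‖ = 1) (hw : ‖w‖ = 1)
    (h : LinearIndependent ℝ ![u, w]) : 0 < 1 - (inner ℝ u w:ℝ) * (inner ℝ u w:ℝ) := by
  have h' := (linearIndependent_fin2.mp h).2
  have hne : u - (inner ℝ u w:ℝ)•w ≠ 0 := by
    intro h0
    exact h' (inner ℝ u w:ℝ) (by rw [sub_eq_zero] at h0; exact h0.symm)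
  have hpos : 0 < ‖u - (inner ℝ u w:ℝ)•w‖ := norm_pos_iff.mpr hne
  rw [proj_norm' u w hw hu] at hpos
  exact Real.sqrt_pos.mp hpos

private lemma dual_algebra (p q r sp sq sr g : ℝ) (hsp : sp*sp = 1-p*p)
    (hg : g*g = 1 - p*p - q*q - r*r + 2*(p*q*r)) (hsp0 : sp ≠ 0) :
    p * (g/(sr*sp)) * (g/(sq*sp)) = (q - r*p)/(sr*sp) * ((r - q*p)/(sq*sp)) + (p - r*q)/(sr*sq) := by
  have step : p * (g/(sr*sp)) * (g/(sq*sp)) =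
      ((q-r*p)*(r-q*p) + (p-r*q)*(sp*sp))/((sr*sq)*(sp*sp)) := by
    rw [show p * (g/(sr*sp)) * (g/(sq*sp)) = p*(g*g)/((sr*sq)*(sp*sp)) from by ring, hg, hsp]
    ring
  rw [step, add_div, mul_div_mul_right _ _ (mul_ne_zero hsp0 hsp0)]
  ring

end Aux

/-- Dual spherical law of cosines: for a spherical triangle given by linearly
independent unit vectors `A`, `B`, `C`,
`cos a * sin B * sin C = cos B * cos C + cos A`, where `a = ∠(B,C)` and the
vertex angles are the angles between the projected sides at each vertex. -/
theorem spherical_dual_law_of_cosines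
    {E : Type*} [NormedAddCommGroup E] [InnerProductSpace ℝ E]
    (A B C : E) (hA : ‖A‖ = 1) (hB : ‖B‖ = 1) (hC : ‖C‖ = 1)
    (hli : LinearIndependent ℝ ![A, B, C]) :
    Real.cos (angle B C) *
      Real.sin (angle (A - (inner ℝ A B : ℝ) • B) (C - (inner ℝ C B : ℝ) • B)) *
      Real.sin (angle (A - (inner ℝ A C : ℝ) • C) (B - (inner ℝ B C : ℝ) • C)) =
    Real.cos (angle (A - (inner ℝ A B : ℝ) • B) (C - (inner ℝ C B : ℝ) • B)) *
      Real.cos (angle (A - (inner ℝ A C : ℝ) • C) (B - (inner ℝ B C : ℝ) • C)) +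
      Real.cos (angle (B - (inner ℝ B A : ℝ) • A) (C - (inner ℝ C A : ℝ) • A)) := by
  classical
  -- pairwise linear independence
  have pairLI : ∀ (i j : Fin 3), i ≠ j → LinearIndependent ℝ ![![A,B,C] i, ![A,B,C] j] := by
    intro i j hij
    have := hli.comp ![i, j] (by
      intro a b hab
      fin_cases a <;> fin_cases b <;> simp_all [Matrix.cons_val_zero, Matrix.cons_val_one] <;>
        first | rfl | (exfalso; exact hij (by simp_all)))
    convert this using 1
    funext k; fin_cases k <;> rfl
  have hAB : LinearIndependent ℝ ![A, B] := pairLI 0 1 (by decide)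
  have hAC : LinearIndependent ℝ ![A, C] := pairLI 0 2 (by decide)
  have hBC : LinearIndependent ℝ ![B, C] := pairLI 1 2 (by decide)
  have hr : 0 < 1 - (inner ℝ A B:ℝ) * (inner ℝ A B:ℝ) := pair_pos' A B hA hB hAB
  have hq : 0 < 1 - (inner ℝ A C:ℝ) * (inner ℝ A C:ℝ) := pair_pos' A C hA hC hAC
  have hp : 0 < 1 - (inner ℝ B C:ℝ) * (inner ℝ B C:ℝ) := pair_pos' B C hB hC hBC

  -- Cauchy–Schwarz for the projections at C gives nonnegativity of the Gram determinant
  have hCS := real_inner_mul_inner_self_le (A - (inner ℝ A C:ℝ)•C) (B - (inner ℝ B C:ℝ)•C)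
  rw [proj_inner' A B C hC, proj_inner' A A C hC, proj_inner' B B C hC,
    real_inner_self_eq_norm_sq, real_inner_self_eq_norm_sq, hA, hB] at hCS
  have hGnn : 0 ≤ 1 - (inner ℝ B C:ℝ)*(inner ℝ B C:ℝ) - (inner ℝ A C:ℝ)*(inner ℝ A C:ℝ)
      - (inner ℝ A B:ℝ)*(inner ℝ A B:ℝ) + 2*((inner ℝ B C:ℝ)*(inner ℝ A C:ℝ)*(inner ℝ A B:ℝ)) := by
    nlinarith [hCS]
  -- sine values
  have hDB : (Real.sqrt (1 - (inner ℝ A B:ℝ) * (inner ℝ A B:ℝ)) *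
      Real.sqrt (1 - (inner ℝ C B:ℝ) * (inner ℝ C B:ℝ))) ≠ 0 := by
    rw [real_inner_comm B C]
    exact mul_ne_zero (ne_of_gt (Real.sqrt_pos.mpr hr)) (ne_of_gt (Real.sqrt_pos.mpr hp))
  have hDC : (Real.sqrt (1 - (inner ℝ A C:ℝ) * (inner ℝ A C:ℝ)) *
      Real.sqrt (1 - (inner ℝ B C:ℝ) * (inner ℝ B C:ℝ))) ≠ 0 :=
    mul_ne_zero (ne_of_gt (Real.sqrt_pos.mpr hq)) (ne_of_gt (Real.sqrt_pos.mpr hp))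
  have hsB : Real.sin (angle (A - (inner ℝ A B:ℝ)•B) (C - (inner ℝ C B:ℝ)•B)) =
      Real.sqrt ((1 - (inner ℝ A B:ℝ) * (inner ℝ A B:ℝ)) * (1 - (inner ℝ C B:ℝ) * (inner ℝ C B:ℝ)) -
        ((inner ℝ A C:ℝ) - (inner ℝ A B:ℝ) * (inner ℝ C B:ℝ)) *
          ((inner ℝ A C:ℝ) - (inner ℝ A B:ℝ) * (inner ℝ C B:ℝ))) /
      (Real.sqrt (1 - (inner ℝ A B:ℝ) * (inner ℝ A B:ℝ)) *
        Real.sqrt (1 - (inner ℝ C B:ℝ) * (inner ℝ C B:ℝ))) :=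
    eq_div_of_mul_eq hDB (proj_sin' A C B hB hA hC)
  have hsC : Real.sin (angle (A - (inner ℝ A C:ℝ)•C) (B - (inner ℝ B C:ℝ)•C)) =
      Real.sqrt ((1 - (inner ℝ A C:ℝ) * (inner ℝ A C:ℝ)) * (1 - (inner ℝ B C:ℝ) * (inner ℝ B C:ℝ)) -
        ((inner ℝ A B:ℝ) - (inner ℝ A C:ℝ) * (inner ℝ B C:ℝ)) *
          ((inner ℝ A B:ℝ) - (inner ℝ A C:ℝ) * (inner ℝ B C:ℝ))) /
      (Real.sqrt (1 - (inner ℝ A C:ℝ) * (inner ℝ A C:ℝ)) *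
        Real.sqrt (1 - (inner ℝ B C:ℝ) * (inner ℝ B C:ℝ))) :=
    eq_div_of_mul_eq hDC (proj_sin' A B C hC hA hB)
  rw [cos_angle B C, hB, hC, hsB, hsC, proj_cos' A C B hB hA hC, proj_cos' A B C hC hA hB,
    proj_cos' B C A hA hB hC]
  rw [real_inner_comm B C, real_inner_comm A B, real_inner_comm A C]
  rw [show ((1 - (inner ℝ A B:ℝ) * (inner ℝ A B:ℝ)) * (1 - (inner ℝ B C:ℝ) * (inner ℝ B C:ℝ)) -
        ((inner ℝ A C:ℝ) - (inner ℝ A B:ℝ) * (inner ℝ B C:ℝ)) *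
          ((inner ℝ A C:ℝ) - (inner ℝ A B:ℝ) * (inner ℝ B C:ℝ))) =
      (1 - (inner ℝ B C:ℝ)*(inner ℝ B C:ℝ) - (inner ℝ A C:ℝ)*(inner ℝ A C:ℝ)
      - (inner ℝ A B:ℝ)*(inner ℝ A B:ℝ) + 2*((inner ℝ B C:ℝ)*(inner ℝ A C:ℝ)*(inner ℝ A B:ℝ))) from by ring,
    show ((1 - (inner ℝ A C:ℝ) * (inner ℝ A C:ℝ)) * (1 - (inner ℝ B C:ℝ) * (inner ℝ B C:ℝ)) -
        ((inner ℝ A B:ℝ) - (inner ℝ A C:ℝ) * (inner ℝ B C:ℝ)) *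
          ((inner ℝ A B:ℝ) - (inner ℝ A C:ℝ) * (inner ℝ B C:ℝ))) =
      (1 - (inner ℝ B C:ℝ)*(inner ℝ B C:ℝ) - (inner ℝ A C:ℝ)*(inner ℝ A C:ℝ)
      - (inner ℝ A B:ℝ)*(inner ℝ A B:ℝ) + 2*((inner ℝ B C:ℝ)*(inner ℝ A C:ℝ)*(inner ℝ A B:ℝ))) from by ring]
  rw [mul_one, div_one]
  exact dual_algebra (inner ℝ B C:ℝ) (inner ℝ A C:ℝ) (inner ℝ A B:ℝ) _ _ _ _
    (Real.mul_self_sqrt hp.le) (Real.mul_self_sqrt hGnn)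
    (ne_of_gt (Real.sqrt_pos.mpr hp))
end

section
/- Lobachevsky's form of the hyperbolic law of cosines (second equation of his system (19)) is equivalent to the modern form: for all real a, b, c and all real A, the equation 1 − cos(Π(b)) · cos(Π(c)) · cos A = sin(Π(b)) · sin(Π(c)) / sin(Π(a)) holds if and only if cosh a = cosh b · cosh c − sinh b · sinh c · cos A. -/
/-- Lobachevsky's angle of parallelism function `Π(p) = 2 * arctan (exp (-p))`. -/
noncomputable def angleOfParallelism (p : ℝ) : ℝ := 2 * Real.arctan (Real.exp (-p))

lemma sin_aop (p : ℝ) : Real.sin (angleOfParallelism p) = 1 / Real.cosh p := by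
  unfold angleOfParallelism
  rw [Real.sin_two_mul, Real.sin_arctan, Real.cos_arctan, Real.cosh_eq]
  have hx : (0:ℝ) < Real.exp (-p) := Real.exp_pos _
  have hs : Real.sqrt (1 + Real.exp (-p) ^ 2) ^ 2 = 1 + Real.exp (-p) ^ 2 :=
    Real.sq_sqrt (by positivity)
  have hs0 : Real.sqrt (1 + Real.exp (-p) ^ 2) ≠ 0 := by positivity
  have he : Real.exp p * Real.exp (-p) = 1 := by
    rw [← Real.exp_add]; simp
  field_simp
  nlinarith [hs, he, Real.exp_pos p]

lemma cos_aop (p : ℝ) : Real.cos (angleOfParallelism p) = Real.tanh p := by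
  unfold angleOfParallelism
  rw [Real.cos_two_mul, Real.cos_arctan, Real.tanh_eq_sinh_div_cosh,
    Real.sinh_eq, Real.cosh_eq]
  have hs : Real.sqrt (1 + Real.exp (-p) ^ 2) ^ 2 = 1 + Real.exp (-p) ^ 2 :=
    Real.sq_sqrt (by positivity)
  have hs0 : Real.sqrt (1 + Real.exp (-p) ^ 2) ≠ 0 := by positivity
  have he : Real.exp p * Real.exp (-p) = 1 := by
    rw [← Real.exp_add]; simp
  have hc : Real.exp p + Real.exp (-p) > 0 := by positivity
  field_simp
  nlinarith [hs, he, Real.exp_pos p]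

/-- Lobachevsky's form of the hyperbolic law of cosines is equivalent to the
modern form:
`1 - cos (Π b) * cos (Π c) * cos A = sin (Π b) * sin (Π c) / sin (Π a)`
iff `cosh a = cosh b * cosh c - sinh b * sinh c * cos A`. -/
theorem lobachevsky_law_of_cosines_iff (a b c A : ℝ) :
    1 - Real.cos (angleOfParallelism b) * Real.cos (angleOfParallelism c) * Real.cos A =
        Real.sin (angleOfParallelism b) * Real.sin (angleOfParallelism c) /
          Real.sin (angleOfParallelism a) ↔
      Real.cosh a = Real.cosh b * Real.cosh c - Real.sinh b * Real.sinh c * Real.cos A := by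
  rw [sin_aop, sin_aop, sin_aop, cos_aop, cos_aop, Real.tanh_eq_sinh_div_cosh,
    Real.tanh_eq_sinh_div_cosh]
  have hb := Real.cosh_pos b
  have hc := Real.cosh_pos c
  have ha := Real.cosh_pos a
  constructor
  · intro h
    field_simp at h
    nlinarith [h, mul_pos hb hc]
  · intro h
    field_simp
    nlinarith [h, mul_pos hb hc]
end

section
/- Euler's cevian relation in Euclidean geometry: let A, B, C be affinely independent points of a Euclidean affine space over ℝ, let O, a, b, c be points with a on the line through B and C, b on the line through C and A, c on the line through A and B, and suppose O lies strictly between A and a, strictly between B and b, and strictly between C and c. Then (dist A O / dist O a) · (dist B O / dist O b) · (dist C O / dist O c) = dist A O / dist O a + dist B O / dist O b + dist C O / dist O c + 2. -/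
open AffineMap Finset

private lemma sbtw_exists_ioo {V P : Type*} [NormedAddCommGroup V] [InnerProductSpace ℝ V]
    [MetricSpace P] [NormedAddTorsor V P] {X O Z : P} (h : Sbtw ℝ X O Z) :
    ∃ t : ℝ, t ∈ Set.Ioo (0:ℝ) 1 ∧ lineMap X Z t = O := by
  obtain ⟨t, ht, hmap⟩ := h.wbtw
  refine ⟨t, ⟨?_, ?_⟩, hmap⟩
  · rcases lt_or_eq_of_le ht.1 with h' | h'
    · exact h'
    · exfalso; apply h.ne_left; rw [← hmap, ← h', lineMap_apply_zero]
  · rcases lt_or_eq_of_le ht.2 with h' | h'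
    · exact h'
    · exfalso; apply h.ne_right; rw [← hmap, h', lineMap_apply_one]

private lemma pair_li {V P : Type*} [NormedAddCommGroup V] [InnerProductSpace ℝ V]
    [MetricSpace P] [NormedAddTorsor V P] {A B C : P}
    (hABC : AffineIndependent ℝ ![A, B, C]) :
    ∀ s t : ℝ, s • (B -ᵥ A) + t • (C -ᵥ A) = 0 → s = 0 ∧ t = 0 := by
  intro s t hst
  have hsum : ∑ i, (![-(s+t), s, t] : Fin 3 → ℝ) i = 0 := by
    simp [Fin.sum_univ_three]
  have hv : Finset.univ.weightedVSub ![A, B, C] (![-(s+t), s, t] : Fin 3 → ℝ) = 0 := by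
    rw [Finset.weightedVSub_eq_weightedVSubOfPoint_of_sum_eq_zero _ _ _ hsum A,
      Finset.weightedVSubOfPoint_apply]
    simp [Fin.sum_univ_three]
    convert hst using 2
  have := hABC Finset.univ _ hsum hv
  exact ⟨by simpa using this 1 (by simp), by simpa using this 2 (by simp)⟩

private lemma mem_span_pair_exists {V P : Type*} [NormedAddCommGroup V] [InnerProductSpace ℝ V]
    [MetricSpace P] [NormedAddTorsor V P] {X Y p : P} (h : p ∈ affineSpan ℝ {X, Y}) :
    ∃ s : ℝ, p -ᵥ X = s • (Y -ᵥ X) := by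
  have : (p -ᵥ X) +ᵥ X ∈ line[ℝ, X, Y] := by rwa [vsub_vadd]
  obtain ⟨r, hr⟩ := vadd_left_mem_affineSpan_pair.mp this
  exact ⟨r, hr.symm⟩

/-- Euler's cevian relation in Euclidean geometry: if `A`, `B`, `C` are affinely
independent points of a Euclidean affine space, `a`, `b`, `c` lie on the lines
`BC`, `CA`, `AB` respectively, and a point `O` lies strictly between `A` and `a`,
between `B` and `b`, and between `C` and `c`, then
`(AO/Oa) * (BO/Ob) * (CO/Oc) = AO/Oa + BO/Ob + CO/Oc + 2`. -/
theorem euler_cevian_relation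
    {V P : Type*} [NormedAddCommGroup V] [InnerProductSpace ℝ V]
    [MetricSpace P] [NormedAddTorsor V P]
    (A B C O a b c : P)
    (hABC : AffineIndependent ℝ ![A, B, C])
    (ha : a ∈ affineSpan ℝ {B, C})
    (hb : b ∈ affineSpan ℝ {C, A})
    (hc : c ∈ affineSpan ℝ {A, B})
    (hOa : Sbtw ℝ A O a) (hOb : Sbtw ℝ B O b) (hOc : Sbtw ℝ C O c) :
    (dist A O / dist O a) * (dist B O / dist O b) * (dist C O / dist O c) =
      dist A O / dist O a + dist B O / dist O b + dist C O / dist O c + 2 := by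
  obtain ⟨t₁, ht₁, hO₁⟩ := sbtw_exists_ioo hOa
  obtain ⟨t₂, ht₂, hO₂⟩ := sbtw_exists_ioo hOb
  obtain ⟨t₃, ht₃, hO₃⟩ := sbtw_exists_ioo hOc
  obtain ⟨s₁, hs₁⟩ := mem_span_pair_exists ha
  obtain ⟨s₂, hs₂⟩ := mem_span_pair_exists hb
  obtain ⟨s₃, hs₃⟩ := mem_span_pair_exists hc
  set u : V := B -ᵥ A with hu
  set v : V := C -ᵥ A with hv
  -- three expressions for O -ᵥ A
  have e₁ : O -ᵥ A = (t₁ * (1 - s₁)) • u + (t₁ * s₁) • v := by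
    have h1 : O -ᵥ A = t₁ • (a -ᵥ A) := by
      rw [← hO₁, lineMap_apply, vadd_vsub]
    have h2 : a -ᵥ A = (a -ᵥ B) + u := by rw [hu, vsub_add_vsub_cancel]
    rw [h1, h2, hs₁]
    have : C -ᵥ B = v - u := by rw [hu, hv, vsub_sub_vsub_cancel_right]
    rw [this]
    module
  have e₂ : O -ᵥ A = (1 - t₂) • u + (t₂ * (1 - s₂)) • v := by
    have h1 : O -ᵥ A = t₂ • (b -ᵥ B) + u := by
      rw [← hO₂, lineMap_apply, hu, vadd_vsub_assoc]
    have h2 : b -ᵥ B = (b -ᵥ C) + (v - u) := by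
      rw [hu, hv, vsub_sub_vsub_cancel_right, vsub_add_vsub_cancel]
    have h3 : A -ᵥ C = -v := by rw [hv, neg_vsub_eq_vsub_rev]
    rw [h1, h2, hs₂, h3]
    module
  have e₃ : O -ᵥ A = (t₃ * s₃) • u + (1 - t₃) • v := by
    have h1 : O -ᵥ A = t₃ • (c -ᵥ C) + v := by
      rw [← hO₃, lineMap_apply, hv, vadd_vsub_assoc]
    have h2 : c -ᵥ C = s₃ • u - v := by
      rw [← hs₃, hv, vsub_sub_vsub_cancel_right]
    rw [h1, h2]
    module
  -- match coefficients
  have key12 : t₁ * (1 - s₁) = 1 - t₂ ∧ t₁ * s₁ = t₂ * (1 - s₂) := by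
    have h0 : (t₁ * (1 - s₁) - (1 - t₂)) • u + (t₁ * s₁ - t₂ * (1 - s₂)) • v = 0 := by
      have := e₁.symm.trans e₂
      rw [sub_smul, sub_smul]
      linear_combination (norm := module) this
    obtain ⟨h1, h2⟩ := pair_li hABC _ _ h0
    constructor <;> linarith
  have key13 : t₁ * (1 - s₁) = t₃ * s₃ ∧ t₁ * s₁ = 1 - t₃ := by
    have h0 : (t₁ * (1 - s₁) - t₃ * s₃) • u + (t₁ * s₁ - (1 - t₃)) • v = 0 := by
      have := e₁.symm.trans e₃
      rw [sub_smul, sub_smul]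
      linear_combination (norm := module) this
    obtain ⟨h1, h2⟩ := pair_li hABC _ _ h0
    constructor <;> linarith
  -- distances
  have d₁ : dist A O / dist O a = t₁ / (1 - t₁) := by
    have hd : dist A a ≠ 0 := dist_ne_zero.2 hOa.left_ne_right
    rw [dist_comm A O, ← hO₁, dist_lineMap_left, dist_lineMap_right,
      Real.norm_eq_abs, Real.norm_eq_abs, abs_of_pos ht₁.1,
      abs_of_pos (by linarith [ht₁.2] : (0:ℝ) < 1 - t₁), mul_div_mul_right _ _ hd]
  have d₂ : dist B O / dist O b = t₂ / (1 - t₂) := by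
    have hd : dist B b ≠ 0 := dist_ne_zero.2 hOb.left_ne_right
    rw [dist_comm B O, ← hO₂, dist_lineMap_left, dist_lineMap_right,
      Real.norm_eq_abs, Real.norm_eq_abs, abs_of_pos ht₂.1,
      abs_of_pos (by linarith [ht₂.2] : (0:ℝ) < 1 - t₂), mul_div_mul_right _ _ hd]
  have d₃ : dist C O / dist O c = t₃ / (1 - t₃) := by
    have hd : dist C c ≠ 0 := dist_ne_zero.2 hOc.left_ne_right
    rw [dist_comm C O, ← hO₃, dist_lineMap_left, dist_lineMap_right,
      Real.norm_eq_abs, Real.norm_eq_abs, abs_of_pos ht₃.1,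
      abs_of_pos (by linarith [ht₃.2] : (0:ℝ) < 1 - t₃), mul_div_mul_right _ _ hd]
  rw [d₁, d₂, d₃]
  -- algebra
  have hsum : (1 - t₁) + (1 - t₂) + (1 - t₃) = 1 := by
    have := key12.1
    have := key13.2
    nlinarith [key12.1, key13.2]
  have h1 : (1 : ℝ) - t₁ ≠ 0 := by linarith [ht₁.2]
  have h2 : (1 : ℝ) - t₂ ≠ 0 := by linarith [ht₂.2]
  have h3 : (1 : ℝ) - t₃ ≠ 0 := by linarith [ht₃.2]
  field_simp
  nlinarith [hsum, sq_nonneg t₁]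
end

section
/- Euler's cevian relation in spherical geometry: let A, B, C be linearly independent unit vectors in a real inner product space, let α, β, γ > 0, and set O = (αA + βB + γC)/‖αA + βB + γC‖, a = (βB + γC)/‖βB + γC‖, b = (αA + γC)/‖αA + γC‖, c = (αA + βB)/‖αA + βB‖. Assume each of the six angles ∠(A,O), ∠(O,a), ∠(B,O), ∠(O,b), ∠(C,O), ∠(O,c) is strictly less than π/2. Then (tan ∠(A,O) / tan ∠(O,a)) · (tan ∠(B,O) / tan ∠(O,b)) · (tan ∠(C,O) / tan ∠(O,c)) = tan ∠(A,O) / tan ∠(O,a) + tan ∠(B,O) / tan ∠(O,b) + tan ∠(C,O) / tan ∠(O,c) + 2. -/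
open InnerProductGeometry
open scoped RealInnerProductSpace

namespace EulerSphericalAux
open InnerProductGeometry Real

variable {E : Type*} [NormedAddCommGroup E] [InnerProductSpace ℝ E]

lemma tan_ratio (A v u : E) (hA : ‖A‖ = 1) {α : ℝ} (hα : 0 < α)
    (hu : u = α • A + v)
    (hp : 0 < ⟪A, u⟫) (hw : 0 < ⟪u, v⟫)
    (hcs : ⟪u, v⟫ < ‖u‖ * ‖v‖) :
    Real.tan (angle A u) / Real.tan (angle u v)
      = (‖u‖ ^ 2 - α * ⟪A, u⟫) / (α * ⟪A, u⟫) := by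
  have hune : u ≠ 0 := fun h => by simp [h] at hp
  have hvne : v ≠ 0 := fun h => by simp [h] at hw
  have hn : (0:ℝ) < ‖u‖ := norm_pos_iff.2 hune
  have hm : (0:ℝ) < ‖v‖ := norm_pos_iff.2 hvne
  set p : ℝ := ⟪A, u⟫ with hpdef
  set w : ℝ := ⟪u, v⟫ with hwdef
  have hs : ⟪A, v⟫ = p - α := by
    rw [hpdef, hu, inner_add_right, real_inner_smul_right, real_inner_self_eq_norm_sq, hA]
    ring
  have hn_eq : ‖u‖ ^ 2 = α ^ 2 + 2 * α * (p - α) + ‖v‖ ^ 2 := by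
    rw [← hs, hu, norm_add_sq_real, real_inner_smul_left, norm_smul, Real.norm_eq_abs,
      abs_of_pos hα, hA, mul_one]
    ring
  have hw_eq : w = α * (p - α) + ‖v‖ ^ 2 := by
    rw [← hs, hwdef, hu, inner_add_left, real_inner_smul_left, real_inner_self_eq_norm_sq]
  have hwp : w = ‖u‖ ^ 2 - α * p := by rw [hw_eq, hn_eq]; ring
  have key2 : α ^ 2 * (‖u‖ ^ 2 - p ^ 2) = ‖u‖ ^ 2 * ‖v‖ ^ 2 - w ^ 2 := by
    rw [hn_eq, hw_eq]; ring
  have hang1 : angle A u = Real.arccos (p / ‖u‖) := by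
    rw [angle, hA, one_mul]
  have hang2 : angle u v = Real.arccos (w / (‖u‖ * ‖v‖)) := by rw [angle]
  have hc1pos : 0 < p / ‖u‖ := div_pos hp hn
  have hc2pos : 0 < w / (‖u‖ * ‖v‖) := div_pos hw (mul_pos hn hm)
  have hc2lt : w / (‖u‖ * ‖v‖) < 1 := (div_lt_one (mul_pos hn hm)).2 hcs
  have hc2sq : 0 < 1 - (w / (‖u‖ * ‖v‖)) ^ 2 := by nlinarith
  have key : 1 - (p / ‖u‖) ^ 2 = (‖v‖ / α) ^ 2 * (1 - (w / (‖u‖ * ‖v‖)) ^ 2) := by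
    field_simp
    linear_combination key2
  have hsqrt : Real.sqrt (1 - (p / ‖u‖) ^ 2)
      = (‖v‖ / α) * Real.sqrt (1 - (w / (‖u‖ * ‖v‖)) ^ 2) := by
    rw [key, Real.sqrt_mul (sq_nonneg _), Real.sqrt_sq (by positivity)]
  have hs2 : Real.sqrt (1 - (w / (‖u‖ * ‖v‖)) ^ 2) ≠ 0 := by positivity
  rw [hang1, hang2, Real.tan_arccos, Real.tan_arccos, hsqrt, ← hwp]
  generalize hS : Real.sqrt (1 - (w / (‖u‖ * ‖v‖)) ^ 2) = S
  rw [hS] at hs2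
  field_simp

lemma inner_pos_of_angle_lt (x y : E) (h : angle x y < Real.pi / 2)
    (hx : x ≠ 0) (hy : y ≠ 0) : 0 < ⟪x, y⟫ := by
  have hc : 0 < Real.cos (angle x y) :=
    Real.cos_pos_of_mem_Ioo ⟨by linarith [angle_nonneg x y, Real.pi_pos], h⟩
  rw [cos_angle] at hc
  have hd : 0 < ‖x‖ * ‖y‖ := mul_pos (norm_pos_iff.2 hx) (norm_pos_iff.2 hy)
  have := mul_pos hc hd
  rwa [div_mul_cancel₀ _ hd.ne'] at this

end EulerSphericalAux


/-- Euler's cevian relation in spherical geometry: let `A`, `B`, `C` be linearly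
independent unit vectors, `α, β, γ > 0`, and let `O`, `a`, `b`, `c` be the unit
vectors in the directions of `αA + βB + γC`, `βB + γC`, `αA + γC`, `αA + βB`
respectively (so `Aa`, `Bb`, `Cc` are concurrent spherical cevians through `O`).
If each of the six arcs `AO`, `Oa`, `BO`, `Ob`, `CO`, `Oc` is strictly shorter
than `π/2`, then
`(tan AO / tan Oa) * (tan BO / tan Ob) * (tan CO / tan Oc)
  = tan AO / tan Oa + tan BO / tan Ob + tan CO / tan Oc + 2`. -/
theorem euler_spherical_cevian_relation
    {E : Type*} [NormedAddCommGroup E] [InnerProductSpace ℝ E]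
    (A B C : E) (hA : ‖A‖ = 1) (hB : ‖B‖ = 1) (hC : ‖C‖ = 1)
    (hli : LinearIndependent ℝ ![A, B, C])
    (α β γ : ℝ) (hα : 0 < α) (hβ : 0 < β) (hγ : 0 < γ)
    (O a b c : E)
    (hO : O = ‖α • A + β • B + γ • C‖⁻¹ • (α • A + β • B + γ • C))
    (ha : a = ‖β • B + γ • C‖⁻¹ • (β • B + γ • C))
    (hb : b = ‖α • A + γ • C‖⁻¹ • (α • A + γ • C))
    (hc : c = ‖α • A + β • B‖⁻¹ • (α • A + β • B))
    (hAO : angle A O < Real.pi / 2) (hOa : angle O a < Real.pi / 2)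
    (hBO : angle B O < Real.pi / 2) (hOb : angle O b < Real.pi / 2)
    (hCO : angle C O < Real.pi / 2) (hOc : angle O c < Real.pi / 2) :
    (Real.tan (angle A O) / Real.tan (angle O a)) *
        (Real.tan (angle B O) / Real.tan (angle O b)) *
        (Real.tan (angle C O) / Real.tan (angle O c)) =
      Real.tan (angle A O) / Real.tan (angle O a) +
        Real.tan (angle B O) / Real.tan (angle O b) +
        Real.tan (angle C O) / Real.tan (angle O c) + 2 := by
  classical
  obtain ⟨u, hu⟩ : ∃ u : E, u = α • A + β • B + γ • C := ⟨_, rfl⟩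
  obtain ⟨va, hva⟩ : ∃ v : E, v = β • B + γ • C := ⟨_, rfl⟩
  obtain ⟨vb, hvb⟩ : ∃ v : E, v = α • A + γ • C := ⟨_, rfl⟩
  obtain ⟨vc, hvc⟩ : ∃ v : E, v = α • A + β • B := ⟨_, rfl⟩
  rw [← hu] at hO
  rw [← hva] at ha
  rw [← hvb] at hb
  rw [← hvc] at hc
  -- linear independence in coordinate form
  have h3 : ∀ x y z : ℝ, x • A + y • B + z • C = 0 → x = 0 ∧ y = 0 ∧ z = 0 := by
    intro x y z h
    have := Fintype.linearIndependent_iff.1 hli ![x, y, z]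
      (by simpa [Fin.sum_univ_three] using h)
    exact ⟨this 0, this 1, this 2⟩
  have hune : u ≠ 0 := fun h => hα.ne' (h3 α β γ (by rw [← hu, h])).1
  have hvane : va ≠ 0 := fun h =>
    hβ.ne' (h3 0 β γ (by rw [show (0:ℝ) • A + β • B + γ • C = β • B + γ • C by module, ← hva, h])).2.1
  have hvbne : vb ≠ 0 := fun h =>
    hα.ne' (h3 α 0 γ (by rw [show α • A + (0:ℝ) • B + γ • C = α • A + γ • C by module, ← hvb, h])).1
  have hvcne : vc ≠ 0 := fun h =>
    hα.ne' (h3 α β 0 (by rw [show α • A + β • B + (0:ℝ) • C = α • A + β • B by module, ← hvc, h])).1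
  have hnu : (0:ℝ) < ‖u‖ := norm_pos_iff.2 hune
  -- rewrite angles
  have hAO' : angle A O = angle A u := by
    rw [hO, angle_smul_right_of_pos _ _ (inv_pos.2 hnu)]
  have hBO' : angle B O = angle B u := by
    rw [hO, angle_smul_right_of_pos _ _ (inv_pos.2 hnu)]
  have hCO' : angle C O = angle C u := by
    rw [hO, angle_smul_right_of_pos _ _ (inv_pos.2 hnu)]
  have hOa' : angle O a = angle u va := by
    rw [hO, ha, angle_smul_left_of_pos _ _ (inv_pos.2 hnu),
      angle_smul_right_of_pos _ _ (inv_pos.2 (norm_pos_iff.2 hvane))]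
  have hOb' : angle O b = angle u vb := by
    rw [hO, hb, angle_smul_left_of_pos _ _ (inv_pos.2 hnu),
      angle_smul_right_of_pos _ _ (inv_pos.2 (norm_pos_iff.2 hvbne))]
  have hOc' : angle O c = angle u vc := by
    rw [hO, hc, angle_smul_left_of_pos _ _ (inv_pos.2 hnu),
      angle_smul_right_of_pos _ _ (inv_pos.2 (norm_pos_iff.2 hvcne))]
  rw [hAO'] at hAO; rw [hOa'] at hOa; rw [hBO'] at hBO
  rw [hOb'] at hOb; rw [hCO'] at hCO; rw [hOc'] at hOc
  rw [hAO', hOa', hBO', hOb', hCO', hOc']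
  have hAne : A ≠ 0 := fun h => by simp [h] at hA
  have hBne : B ≠ 0 := fun h => by simp [h] at hB
  have hCne : C ≠ 0 := fun h => by simp [h] at hC
  -- positivity of inner products
  have hpA : 0 < ⟪A, u⟫ := EulerSphericalAux.inner_pos_of_angle_lt A u hAO hAne hune
  have hpB : 0 < ⟪B, u⟫ := EulerSphericalAux.inner_pos_of_angle_lt B u hBO hBne hune
  have hpC : 0 < ⟪C, u⟫ := EulerSphericalAux.inner_pos_of_angle_lt C u hCO hCne hune
  have hwa : 0 < ⟪u, va⟫ := EulerSphericalAux.inner_pos_of_angle_lt u va hOa hune hvane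
  have hwb : 0 < ⟪u, vb⟫ := EulerSphericalAux.inner_pos_of_angle_lt u vb hOb hune hvbne
  have hwc : 0 < ⟪u, vc⟫ := EulerSphericalAux.inner_pos_of_angle_lt u vc hOc hune hvcne
  -- strict Cauchy-Schwarz for each cevian
  have hcsa : ⟪u, va⟫ < ‖u‖ * ‖va‖ := by
    rw [inner_lt_norm_mul_iff_real]
    intro h
    have hh : ‖va‖ • u - ‖u‖ • va = 0 := sub_eq_zero.2 h
    have h0 : (‖va‖ * α) • A + ((‖va‖ - ‖u‖) * β) • B + ((‖va‖ - ‖u‖) * γ) • C = 0 := by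
      calc (‖va‖ * α) • A + ((‖va‖ - ‖u‖) * β) • B + ((‖va‖ - ‖u‖) * γ) • C
          = ‖va‖ • (α • A + β • B + γ • C) - ‖u‖ • (β • B + γ • C) := by module
        _ = ‖va‖ • u - ‖u‖ • va := by rw [← hu, ← hva]
        _ = 0 := hh
    exact absurd (h3 _ _ _ h0).1 (mul_pos (norm_pos_iff.2 hvane) hα).ne'
  have hcsb : ⟪u, vb⟫ < ‖u‖ * ‖vb‖ := by
    rw [inner_lt_norm_mul_iff_real]
    intro h
    have hh : ‖vb‖ • u - ‖u‖ • vb = 0 := sub_eq_zero.2 h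
    have h0 : ((‖vb‖ - ‖u‖) * α) • A + (‖vb‖ * β) • B + ((‖vb‖ - ‖u‖) * γ) • C = 0 := by
      calc ((‖vb‖ - ‖u‖) * α) • A + (‖vb‖ * β) • B + ((‖vb‖ - ‖u‖) * γ) • C
          = ‖vb‖ • (α • A + β • B + γ • C) - ‖u‖ • (α • A + γ • C) := by module
        _ = ‖vb‖ • u - ‖u‖ • vb := by rw [← hu, ← hvb]
        _ = 0 := hh
    exact absurd (h3 _ _ _ h0).2.1 (mul_pos (norm_pos_iff.2 hvbne) hβ).ne'
  have hcsc : ⟪u, vc⟫ < ‖u‖ * ‖vc‖ := by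
    rw [inner_lt_norm_mul_iff_real]
    intro h
    have hh : ‖vc‖ • u - ‖u‖ • vc = 0 := sub_eq_zero.2 h
    have h0 : ((‖vc‖ - ‖u‖) * α) • A + ((‖vc‖ - ‖u‖) * β) • B + (‖vc‖ * γ) • C = 0 := by
      calc ((‖vc‖ - ‖u‖) * α) • A + ((‖vc‖ - ‖u‖) * β) • B + (‖vc‖ * γ) • C
          = ‖vc‖ • (α • A + β • B + γ • C) - ‖u‖ • (α • A + β • B) := by module
        _ = ‖vc‖ • u - ‖u‖ • vc := by rw [← hu, ← hvc]
        _ = 0 := hh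
    exact absurd (h3 _ _ _ h0).2.2 (mul_pos (norm_pos_iff.2 hvcne) hγ).ne'
  -- the three ratio formulas
  have hta := EulerSphericalAux.tan_ratio A va u hA hα
    (by rw [hu, hva]; module) hpA hwa hcsa
  have htb := EulerSphericalAux.tan_ratio B vb u hB hβ
    (by rw [hu, hvb]; module) hpB hwb hcsb
  have htc := EulerSphericalAux.tan_ratio C vc u hC hγ
    (by rw [hu, hvc]; module) hpC hwc hcsc
  rw [hta, htb, htc]
  -- the sum identity
  have hsum : ‖u‖ ^ 2 = α * ⟪A, u⟫ + β * ⟪B, u⟫ + γ * ⟪C, u⟫ := by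
    rw [← real_inner_self_eq_norm_sq]
    nth_rewrite 1 [hu]
    rw [inner_add_left, inner_add_left, real_inner_smul_left, real_inner_smul_left,
      real_inner_smul_left]
  rw [hsum]
  have h1 : (0:ℝ) < α * ⟪A, u⟫ := by positivity
  have h2 : (0:ℝ) < β * ⟪B, u⟫ := by positivity
  have h3' : (0:ℝ) < γ * ⟪C, u⟫ := by positivity
  field_simp
  ring
end

section
/- The hyperbolic Pythagorean theorem degenerates to the Euclidean one as the space constant tends to infinity: let a ≥ 0 and b ≥ 0 be real numbers, and let c : ℝ → ℝ be any function such that for every k > 0 one has c k ≥ 0 and cosh (c k) = cosh (a/k) · cosh (b/k). Then the function k ↦ k · c k tends to √(a² + b²) as k → ∞ (Filter.Tendsto along atTop). -/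
open Real Filter Topology

/-- slope limit for a function with derivative 1 at 0 and value 0. -/
private lemma slope_limit {f : ℝ → ℝ} (hf0 : f 0 = 0) (hd : HasDerivAt f 1 0) :
    Tendsto (fun x => f x / x) (𝓝[≠] (0:ℝ)) (𝓝 1) := by
  have := hasDerivAt_iff_tendsto_slope.mp hd
  refine this.congr (fun x => ?_)
  simp [slope_def_field, hf0, div_eq_div_iff]

private lemma tendsto_mul_sinh (a : ℝ) :
    Tendsto (fun k : ℝ => k * Real.sinh (a / k)) atTop (𝓝 a) := by
  rcases eq_or_ne a 0 with rfl | ha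
  · simpa using tendsto_const_nhds.congr (fun k : ℝ => by simp)
  · have h1 : Tendsto (fun k : ℝ => a / k) atTop (𝓝[≠] (0:ℝ)) := by
      rw [tendsto_nhdsWithin_iff]
      constructor
      · simpa using tendsto_const_nhds.div_atTop tendsto_id
      · filter_upwards [eventually_gt_atTop (0:ℝ)] with k hk
        exact div_ne_zero ha hk.ne'
    have h2 : Tendsto (fun k : ℝ => Real.sinh (a / k) / (a / k)) atTop (𝓝 1) :=
      (slope_limit Real.sinh_zero (by simpa using Real.hasDerivAt_sinh 0)).comp h1
    have h3 := h2.const_mul a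
    rw [mul_one] at h3
    refine h3.congr' ?_
    filter_upwards [eventually_gt_atTop (0:ℝ)] with k hk
    field_simp

/-- The hyperbolic Pythagorean theorem degenerates to the Euclidean one as the
space constant tends to infinity: if for every `k > 0` the rescaled hypotenuse
`c k ≥ 0` satisfies `cosh (c k) = cosh (a/k) * cosh (b/k)`, then `k * c k` tends
to `√(a² + b²)` as `k → ∞`. -/
theorem hyperbolic_pythagoras_euclidean_limit
    (a b : ℝ) (ha : 0 ≤ a) (hb : 0 ≤ b) (c : ℝ → ℝ)
    (hc : ∀ k : ℝ, 0 < k → 0 ≤ c k ∧ Real.cosh (c k) = Real.cosh (a / k) * Real.cosh (b / k)) :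
    Filter.Tendsto (fun k : ℝ => k * c k) Filter.atTop
      (nhds (Real.sqrt (a ^ 2 + b ^ 2))) := by
  rcases eq_or_lt_of_le (by positivity : (0:ℝ) ≤ a ^ 2 + b ^ 2) with hab | hab
  · -- a = b = 0
    have ha0 : a = 0 := by nlinarith
    have hb0 : b = 0 := by nlinarith
    rw [← hab, Real.sqrt_zero]
    refine tendsto_const_nhds.congr' ?_
    filter_upwards [eventually_gt_atTop (0:ℝ)] with k hk
    obtain ⟨hc1, hc2⟩ := hc k hk
    have : Real.cosh (c k) = 1 := by simp [hc2, ha0, hb0]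
    have hs : Real.sinh (c k) = 0 := by
      have := Real.sinh_sq (c k)
      nlinarith [Real.sinh_nonneg_iff.mpr hc1]
    have : c k = 0 := Real.sinh_eq_zero.mp hs
    simp [this]
  · -- main case
    set F : ℝ → ℝ := fun k =>
      Real.sqrt ((k * Real.sinh (a / k)) ^ 2 * Real.cosh (b / k) ^ 2
        + (k * Real.sinh (b / k)) ^ 2) with hF_def
    have hcoshb : Tendsto (fun k : ℝ => Real.cosh (b / k)) atTop (𝓝 1) := by
      have : Tendsto (fun k : ℝ => b / k) atTop (𝓝 0) := by
        simpa using tendsto_const_nhds.div_atTop tendsto_id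
      simpa [Function.comp_def] using (Real.continuous_cosh.tendsto 0).comp this
    have hF : Tendsto F atTop (𝓝 (Real.sqrt (a ^ 2 + b ^ 2))) := by
      have : Tendsto (fun k : ℝ => (k * Real.sinh (a / k)) ^ 2 * Real.cosh (b / k) ^ 2
          + (k * Real.sinh (b / k)) ^ 2) atTop (𝓝 (a ^ 2 * 1 ^ 2 + b ^ 2)) :=
        (((tendsto_mul_sinh a).pow 2).mul (hcoshb.pow 2)).add ((tendsto_mul_sinh b).pow 2)
      simpa using this.sqrt
    -- identities for k > 0
    have key : ∀ᶠ k in atTop, F k = k * Real.sinh (c k) ∧ Real.sinh (c k) ≠ 0 := by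
      filter_upwards [eventually_gt_atTop (0:ℝ)] with k hk
      obtain ⟨hc1, hc2⟩ := hc k hk
      have hsa := Real.cosh_sq (a / k)
      have hsb := Real.cosh_sq (b / k)
      have hsc := Real.sinh_sq (c k)
      have hrad : (k * Real.sinh (a / k)) ^ 2 * Real.cosh (b / k) ^ 2
          + (k * Real.sinh (b / k)) ^ 2 = (k * Real.sinh (c k)) ^ 2 := by
        have hcc : Real.cosh (c k) ^ 2 = Real.cosh (a/k) ^ 2 * Real.cosh (b/k) ^ 2 := by
          rw [hc2]; ring
        linear_combination (-(k^2) * Real.cosh (b/k)^2) * hsa - k^2 * hsb - k^2 * hsc - k^2 * hcc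
      have hsnn : 0 ≤ Real.sinh (c k) := Real.sinh_nonneg_iff.mpr hc1
      constructor
      · rw [hF_def]
        simp only
        rw [hrad, Real.sqrt_sq (by positivity)]
      · intro h0
        have hcosh1 : Real.cosh (c k) = 1 := by nlinarith [Real.cosh_pos (c k)]
        have : a / k ≠ 0 ∨ b / k ≠ 0 := by
          rcases eq_or_ne a 0 with rfl | h
          · right; have : b ≠ 0 := by intro h; rw [h] at hab; norm_num at hab
            exact div_ne_zero this hk.ne'
          · left; exact div_ne_zero h hk.ne'
        rcases this with h | h
        · nlinarith [Real.one_lt_cosh.mpr h, Real.one_le_cosh (b / k)]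
        · nlinarith [Real.one_lt_cosh.mpr h, Real.one_le_cosh (a / k)]
    -- sinh (c k) → 0 within ≠ 0
    have hs0 : Tendsto (fun k => Real.sinh (c k)) atTop (𝓝[≠] (0:ℝ)) := by
      rw [tendsto_nhdsWithin_iff]
      constructor
      · have h1 : Tendsto (fun k : ℝ => F k * k⁻¹) atTop (𝓝 (Real.sqrt (a^2+b^2) * 0)) :=
          hF.mul tendsto_inv_atTop_zero
        rw [mul_zero] at h1
        refine h1.congr' ?_
        filter_upwards [key, eventually_gt_atTop (0:ℝ)] with k ⟨hk1, _⟩ hk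
        rw [hk1]; field_simp
      · filter_upwards [key] with k hk
        exact hk.2
    have hA : Tendsto (fun k => Real.arsinh (Real.sinh (c k)) / Real.sinh (c k)) atTop (𝓝 1) :=
      (slope_limit Real.arsinh_zero (by simpa using Real.hasDerivAt_arsinh 0)).comp hs0
    have hfinal := hA.mul hF
    rw [one_mul] at hfinal
    refine hfinal.congr' ?_
    filter_upwards [key, eventually_gt_atTop (0:ℝ)] with k ⟨hk1, hk2⟩ hk
    rw [hk1, Real.arsinh_sinh]
    field_simp
end
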